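/- 2×2×2 Abalone starting from the Belgian-daisy-type configuration B1 is a draw under optimal play: from B1, every optimal line of play remains forever within the set S = {B1, B2, B3, ±B6, ±B9, ±B10, ±B13} of constellations, so o(B1) = D. -/

import Mathlib

/-- An abstract two-player game with perfect information and alternating moves.
`true` denotes Left (Black) and `false` denotes Right (Gray). -/
structure AGame (P : Type*) where
  /-- `move pl p q` : player `pl` has a legal move from position `p` to position `q`. -/
  move : Bool → P → P → Prop
  /-- `win pl p` : the position `p` is a terminal win for player `pl`. -/
  win : Bool → P → Prop

namespace AGame

variable {P : Type*}

/-- `FW G pl turn p` : player `pl` can force a win (in finitely many moves)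
from position `p` when it is `turn`'s move. -/
inductive FW (G : AGame P) (pl : Bool) : Bool → P → Prop
  | terminal (turn : Bool) (p : P) : G.win pl p → FW G pl turn p
  | self (p q : P) : ¬ G.win (!pl) p → G.move pl p q → FW G pl (!pl) q → FW G pl pl p
  | opp (p : P) : ¬ G.win (!pl) p → (∃ q, G.move (!pl) p q) →
      (∀ q, G.move (!pl) p q → FW G pl pl q) → FW G pl (!pl) p

/-- Outcome class `L` : Left (Black) always wins, whoever moves first. -/
def OutL (G : AGame P) (p : P) : Prop := G.FW true true p ∧ G.FW true false p

/-- Outcome class `R` : Right (Gray) always wins, whoever moves first. -/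
def OutR (G : AGame P) (p : P) : Prop := G.FW false false p ∧ G.FW false true p

/-- Outcome class `N` : whoever moves next wins. -/
def OutN (G : AGame P) (p : P) : Prop := G.FW true true p ∧ G.FW false false p

/-- Outcome class `D` : neither player can force a win (optimal play is an infinite draw). -/
def OutD (G : AGame P) (p : P) : Prop :=
  ¬ G.FW true true p ∧ ¬ G.FW true false p ∧ ¬ G.FW false true p ∧ ¬ G.FW false false p

/-- Outcome class `N̂` : Left wins moving first, and the game is a draw if Right moves first. -/
def OutNhat (G : AGame P) (p : P) : Prop :=
  G.FW true true p ∧ ¬ G.FW true false p ∧ ¬ G.FW false false p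

/-- Outcome class `Ň` : Right wins moving first, and the game is a draw if Left moves first. -/
def OutNcheck (G : AGame P) (p : P) : Prop :=
  G.FW false false p ∧ ¬ G.FW false true p ∧ ¬ G.FW true true p

end AGame

namespace Abalone

/-- A board cell, in axial hexagonal coordinates `(q, r)` where `q` is the column. -/
abbrev Cell : Type := ℤ × ℤ

/-- A constellation: each cell carries a black marble (`some true`),
a gray marble (`some false`), or is empty (`none`). -/
abbrev Pos : Type := Cell → Option Bool

/-- The six unit directions of the hexagonal grid. -/
def dirs : List Cell := [(1, 0), (0, 1), (-1, 1), (-1, 0), (0, -1), (1, -1)]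

/-- Add a direction to a cell. -/
def addc (x d : Cell) : Cell := (x.1 + d.1, x.2 + d.2)

/-- The cell `n` steps from `x` in direction `d`. -/
def stepc (x : Cell) (n : ℕ) (d : Cell) : Cell := (x.1 + (n : ℤ) * d.1, x.2 + (n : ℤ) * d.2)

/-- The opposite direction. -/
def negd (d : Cell) : Cell := (-d.1, -d.2)

open Classical in
/-- The result of shifting the line of `len` marbles starting one step after `x`
(in direction `d`, with the marble at `x` itself moving into the vacated space):
cell `x` is vacated, each cell `x + i·d` (`1 ≤ i ≤ len`) receives the content of its
predecessor, and marbles shifted off the board are removed. -/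
noncomputable def shiftResult (board : Finset Cell) (c : Pos) (x d : Cell) (len : ℕ) : Pos :=
  fun y =>
    if y ∉ board then none
    else if y = x then none
    else if ∃ i : ℕ, 1 ≤ i ∧ i ≤ len ∧ y = stepc x i d then c (addc y (negd d))
    else c y

/-- In-line movement (including sumito pushes): player `pl` moves a line of `k` of their
own contiguous marbles (`1 ≤ k ≤ maxG`) one step in the line's direction `d`, possibly
pushing a strictly shorter opposing line of `m < k` marbles, the leading opposing marble
being pushed either onto an empty board cell or off the board. -/
def InlineMove (board : Finset Cell) (maxG : ℕ) (pl : Bool) (c c' : Pos) : Prop :=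
  ∃ x d, d ∈ dirs ∧ ∃ k m : ℕ,
    1 ≤ k ∧ k ≤ maxG ∧ m < k ∧
    (∀ i < k, stepc x i d ∈ board ∧ c (stepc x i d) = some pl) ∧
    (∀ i, k ≤ i → i < k + m → stepc x i d ∈ board ∧ c (stepc x i d) = some (!pl)) ∧
    ((m = 0 ∧ stepc x k d ∈ board ∧ c (stepc x k d) = none) ∨
      (1 ≤ m ∧ (stepc x (k + m) d ∉ board ∨ c (stepc x (k + m) d) = none))) ∧
    c' = shiftResult board c x d (k + m)

open Classical in
/-- The result of a broadside move: the `k` marbles at `x + i·d` (`i < k`) each move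
one step in direction `e`. -/
noncomputable def broadResult (c : Pos) (pl : Bool) (x d e : Cell) (k : ℕ) : Pos :=
  fun y =>
    if ∃ i < k, y = stepc x i d then none
    else if ∃ i < k, y = addc (stepc x i d) e then some pl
    else c y

/-- Broadside movement: player `pl` moves a line of `k` of their own contiguous marbles
(`1 ≤ k ≤ maxG`, the line in direction `d`) one step in a direction `e` not along the
line, each marble landing on an empty board cell. -/
def BroadsideMove (board : Finset Cell) (maxG : ℕ) (pl : Bool) (c c' : Pos) : Prop :=
  ∃ x d e, d ∈ dirs ∧ e ∈ dirs ∧ e ≠ d ∧ e ≠ negd d ∧ ∃ k : ℕ,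
    1 ≤ k ∧ k ≤ maxG ∧
    (∀ i < k, stepc x i d ∈ board ∧ c (stepc x i d) = some pl) ∧
    (∀ i < k, addc (stepc x i d) e ∈ board ∧ c (addc (stepc x i d) e) = none) ∧
    c' = broadResult c pl x d e k

/-- A legal Abalone move for player `pl`. -/
def Move (board : Finset Cell) (maxG : ℕ) (pl : Bool) (c c' : Pos) : Prop :=
  InlineMove board maxG pl c c' ∨ BroadsideMove board maxG pl c c'

/-- The number of marbles of player `pl` on the board. -/
def countM (board : Finset Cell) (pl : Bool) (c : Pos) : ℕ :=
  (board.filter (fun y => c y = some pl)).card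

/-- Player `pl` has won: the opponent has fewer than `n` marbles left,
i.e. at least one opposing marble has been pushed off the board. -/
def Wins (board : Finset Cell) (n : ℕ) (pl : Bool) (c : Pos) : Prop :=
  countM board (!pl) c < n

/-- The negative of a constellation: swap black and gray marbles. -/
def negP (c : Pos) : Pos := fun y => (c y).map (fun b => !b)

end Abalone

namespace Abalone

/-! ### The 2×2×2 Abalone board

A hexagonal grid of 7 cells (columns of sizes 2, 3, 2). In axial coordinates, the
left column is `lt = (-1,0)` (top), `lb = (-1,1)` (bottom); the middle column is
`mt = (0,-1)`, `mm = (0,0)`, `mb = (0,1)`; the right column is `rt = (1,-1)`,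
`rb = (1,0)`. Each player has 2 marbles, may move 1–2 contiguous marbles, a 2-line
may push 1 opposing marble, and a player wins by ejecting one opposing marble. -/

def lt : Cell := (-1, 0)
def lb : Cell := (-1, 1)
def mt : Cell := (0, -1)
def mm : Cell := (0, 0)
def mb : Cell := (0, 1)
def rt : Cell := (1, -1)
def rb : Cell := (1, 0)

def board222 : Finset Cell := {lt, lb, mt, mm, mb, rt, rb}

/-- 2×2×2 Abalone as a game: moves of 1–2 contiguous marbles, win by
reducing the opponent to fewer than 2 marbles. -/
def G222 : AGame Pos :=
  { move := Move board222 2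
    win := Wins board222 2 }

/-- The constellation with black marbles on `b1, b2` and gray marbles on `g1, g2`. -/
def mk2 (b1 b2 g1 g2 : Cell) : Pos := fun y =>
  if y = b1 ∨ y = b2 then some true
  else if y = g1 ∨ y = g2 then some false
  else none

/-- The 14 boards `B0`–`B13` of the paper (Figure 4). -/
def B0 : Pos := mk2 lt lb rt rb
def B1 : Pos := mk2 lt rb lb rt
def B2 : Pos := mk2 lt rt lb rb
def B3 : Pos := mk2 lt mb lb mt
def B4 : Pos := mk2 lt mt lb mb
def B5 : Pos := mk2 mt mb lt lb
def B6 : Pos := mk2 lt rb lb mt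
def B7 : Pos := mk2 rb mt lt lb
def B8 : Pos := mk2 lt mm mb rb
def B9 : Pos := mk2 lt mm mb rt
def B10 : Pos := mk2 lt mm lb rt
def B11 : Pos := mk2 lt mm lb mb
def B12 : Pos := mk2 lt mm lb rb
def B13 : Pos := mk2 lt mm lb mt

end Abalone

namespace Abalone

abbrev St : Type := Fin 7 → Option Bool

def cellAt : Fin 7 → Cell := ![lt, lb, mt, mm, mb, rt, rb]

def idx? (y : Cell) : Option (Fin 7) :=
  if y = lt then some 0 else if y = lb then some 1 else if y = mt then some 2
  else if y = mm then some 3 else if y = mb then some 4 else if y = rt then some 5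
  else if y = rb then some 6 else none

def dec (v : St) : Pos := fun y => (idx? y).elim none v

def cells : List Cell := [lt, lb, mt, mm, mb, rt, rb]

lemma mem_board_iff (y : Cell) :
    y ∈ board222 ↔ y = lt ∨ y = lb ∨ y = mt ∨ y = mm ∨ y = mb ∨ y = rt ∨ y = rb := by
  simp [board222]

lemma mem_board_cells (y : Cell) : y ∈ board222 ↔ y ∈ cells := by
  simp [mem_board_iff, cells]

lemma idx?_eq_none {y : Cell} (h : y ∉ board222) : idx? y = none := by
  rw [mem_board_iff] at h
  push_neg at h
  obtain ⟨h1, h2, h3, h4, h5, h6, h7⟩ := h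
  simp [idx?, h1, h2, h3, h4, h5, h6, h7]

lemma dec_off (v : St) {y : Cell} (h : y ∉ board222) : dec v y = none := by
  simp [dec, idx?_eq_none h]

lemma idx?_cellAt (i : Fin 7) : idx? (cellAt i) = some i := by
  fin_cases i <;> decide

lemma dec_cellAt (v : St) (i : Fin 7) : dec v (cellAt i) = v i := by
  simp [dec, idx?_cellAt]

lemma mem_board_cellAt {y : Cell} (h : y ∈ board222) : ∃ i, y = cellAt i := by
  rw [mem_board_iff] at h
  rcases h with h | h | h | h | h | h | h <;> subst h
  exacts [⟨0, rfl⟩, ⟨1, rfl⟩, ⟨2, rfl⟩, ⟨3, rfl⟩, ⟨4, rfl⟩, ⟨5, rfl⟩, ⟨6, rfl⟩]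

lemma stepc_zero (x d : Cell) : stepc x 0 d = x := by simp [stepc]

end Abalone
namespace Abalone

def existsStep (x d y : Cell) (len : ℕ) : Prop := ∃ i : ℕ, 1 ≤ i ∧ i ≤ len ∧ y = stepc x i d

instance (x d y : Cell) (len : ℕ) : Decidable (existsStep x d y len) :=
  decidable_of_iff (∃ i < len + 1, 1 ≤ i ∧ y = stepc x i d) (by
    constructor
    · rintro ⟨i, h1, h2, h3⟩; exact ⟨i, h2, by omega, h3⟩
    · rintro ⟨i, h1, h2, h3⟩; exact ⟨i, by omega, h1, h3⟩)

def shiftC (v : St) (x d : Cell) (len : ℕ) : St := fun i =>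
  if cellAt i = x then none
  else if existsStep x d (cellAt i) len then dec v (addc (cellAt i) (negd d))
  else v i

lemma dec_shiftC (v : St) (x d : Cell) (len : ℕ) :
    dec (shiftC v x d len) = shiftResult board222 (dec v) x d len := by
  funext y
  by_cases hy : y ∈ board222
  · obtain ⟨i, rfl⟩ := mem_board_cellAt hy
    rw [dec_cellAt]
    simp only [shiftResult, shiftC]
    rw [if_neg (not_not_intro hy)]
    by_cases h1 : cellAt i = x
    · rw [if_pos h1, if_pos h1]
    · rw [if_neg h1, if_neg h1]
      by_cases h2 : existsStep x d (cellAt i) len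
      · have h2' : ∃ j : ℕ, 1 ≤ j ∧ j ≤ len ∧ cellAt i = stepc x j d := h2
        rw [if_pos h2, if_pos h2']
      · have h2' : ¬ ∃ j : ℕ, 1 ≤ j ∧ j ≤ len ∧ cellAt i = stepc x j d := h2
        rw [if_neg h2, if_neg h2']
        exact (dec_cellAt v i).symm
  · rw [dec_off _ hy]
    simp only [shiftResult]
    rw [if_pos hy]

def existsLine (x d y : Cell) (k : ℕ) : Prop := ∃ i < k, y = stepc x i d
def existsLine2 (x d e y : Cell) (k : ℕ) : Prop := ∃ i < k, y = addc (stepc x i d) e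

instance (x d y : Cell) (k : ℕ) : Decidable (existsLine x d y k) := by
  unfold existsLine; infer_instance
instance (x d e y : Cell) (k : ℕ) : Decidable (existsLine2 x d e y k) := by
  unfold existsLine2; infer_instance

def broadC (v : St) (pl : Bool) (x d e : Cell) (k : ℕ) : St := fun i =>
  if existsLine x d (cellAt i) k then none
  else if existsLine2 x d e (cellAt i) k then some pl
  else v i

lemma dec_broadC (v : St) (pl : Bool) (x d e : Cell) (k : ℕ)
    (hb : ∀ i < k, stepc x i d ∈ board222)
    (hb2 : ∀ i < k, addc (stepc x i d) e ∈ board222) :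
    dec (broadC v pl x d e k) = broadResult (dec v) pl x d e k := by
  funext y
  by_cases hy : y ∈ board222
  · obtain ⟨i, rfl⟩ := mem_board_cellAt hy
    rw [dec_cellAt]
    simp only [broadResult, broadC]
    by_cases h1 : existsLine x d (cellAt i) k
    · have h1' : ∃ j < k, cellAt i = stepc x j d := h1
      rw [if_pos h1, if_pos h1']
    · have h1' : ¬ ∃ j < k, cellAt i = stepc x j d := h1
      rw [if_neg h1, if_neg h1']
      by_cases h2 : existsLine2 x d e (cellAt i) k
      · have h2' : ∃ j < k, cellAt i = addc (stepc x j d) e := h2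
        rw [if_pos h2, if_pos h2']
      · have h2' : ¬ ∃ j < k, cellAt i = addc (stepc x j d) e := h2
        rw [if_neg h2, if_neg h2']
        exact (dec_cellAt v i).symm
  · rw [dec_off _ hy]
    simp only [broadResult]
    rw [if_neg, if_neg]
    · exact (dec_off v hy).symm
    · rintro ⟨j, hj, rfl⟩; exact hy (hb2 j hj)
    · rintro ⟨j, hj, rfl⟩; exact hy (hb j hj)

end Abalone
namespace Abalone

def condI (pl : Bool) (v : St) (x d : Cell) (k m : ℕ) : Prop :=
  (∀ i < k, dec v (stepc x i d) = some pl ∧ stepc x i d ∈ cells) ∧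
  (∀ i < k + m, k ≤ i → dec v (stepc x i d) = some (!pl) ∧ stepc x i d ∈ cells) ∧
  ((m = 0 ∧ stepc x k d ∈ cells ∧ dec v (stepc x k d) = none) ∨
    (1 ≤ m ∧ (stepc x (k + m) d ∉ cells ∨ dec v (stepc x (k + m) d) = none)))

instance (pl : Bool) (v : St) (x d : Cell) (k m : ℕ) : Decidable (condI pl v x d k m) := by
  unfold condI
  exact @instDecidableAnd _ _ inferInstance (@instDecidableAnd _ _ inferInstance inferInstance)

def condB (pl : Bool) (v : St) (x d e : Cell) (k : ℕ) : Prop :=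
  (∀ i < k, dec v (stepc x i d) = some pl ∧ stepc x i d ∈ cells) ∧
  e ≠ d ∧ e ≠ negd d ∧
  (∀ i < k, dec v (addc (stepc x i d) e) = none ∧ addc (stepc x i d) e ∈ cells)

instance (pl : Bool) (v : St) (x d e : Cell) (k : ℕ) : Decidable (condB pl v x d e k) := by
  unfold condB
  exact @instDecidableAnd _ _ inferInstance (@instDecidableAnd _ _ inferInstance
    (@instDecidableAnd _ _ inferInstance inferInstance))

def kms : List (ℕ × ℕ) := [(1,0),(2,0),(2,1)]

def ownL (pl : Bool) (v : St) (x d : Cell) (k : ℕ) : Prop :=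
  ∀ i < k, dec v (stepc x i d) = some pl ∧ stepc x i d ∈ cells

instance (pl : Bool) (v : St) (x d : Cell) (k : ℕ) : Decidable (ownL pl v x d k) := by
  unfold ownL; infer_instance

def succs (pl : Bool) (v : St) : List St :=
  (cells.flatMap fun x =>
    if dec v x = some pl then
      dirs.flatMap fun d => kms.filterMap fun km =>
        if condI pl v x d km.1 km.2 then some (shiftC v x d (km.1 + km.2)) else none
    else []) ++
  (cells.flatMap fun x =>
    if dec v x = some pl then
      dirs.flatMap fun d => ([1, 2] : List ℕ).flatMap fun k =>
        if ownL pl v x d k then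
          dirs.filterMap fun e =>
            if condB pl v x d e k then some (broadC v pl x d e k) else none
        else []
    else [])

lemma move_iff (pl : Bool) (v : St) (c' : Pos) :
    Move board222 2 pl (dec v) c' ↔ ∃ w ∈ succs pl v, c' = dec w := by
  constructor
  · rintro (⟨x, d, hd, k, m, hk1, hk2, hm, hown, hopp, hpush, rfl⟩ |
      ⟨x, d, e, hd, he, hed, hed', k, hk1, hk2, hown, htgt, rfl⟩)
    · have hx : x ∈ cells := by
        have h0 := (hown 0 (by omega)).1
        rw [stepc_zero] at h0
        exact (mem_board_cells x).1 h0
      have hc : condI pl v x d k m := by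
        refine ⟨fun i hi => ⟨(hown i hi).2, (mem_board_cells _).1 (hown i hi).1⟩,
          fun i hikm hki => ⟨(hopp i hki hikm).2, (mem_board_cells _).1 (hopp i hki hikm).1⟩, ?_⟩
        rcases hpush with ⟨h1, h2, h3⟩ | ⟨h1, h2⟩
        · exact Or.inl ⟨h1, (mem_board_cells _).1 h2, h3⟩
        · refine Or.inr ⟨h1, ?_⟩
          rcases h2 with h2 | h2
          · exact Or.inl (fun hc => h2 ((mem_board_cells _).2 hc))
          · exact Or.inr h2
      have hkm : (k, m) ∈ kms := by
        have : (k = 1 ∧ m = 0) ∨ (k = 2 ∧ m = 0) ∨ (k = 2 ∧ m = 1) := by omega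
        rcases this with ⟨rfl, rfl⟩ | ⟨rfl, rfl⟩ | ⟨rfl, rfl⟩ <;> simp [kms]
      refine ⟨shiftC v x d (k + m), ?_, (dec_shiftC v x d (k + m)).symm⟩
      apply List.mem_append_left
      rw [List.mem_flatMap]
      refine ⟨x, hx, ?_⟩
      rw [if_pos (by rw [← stepc_zero x d]; exact (hown 0 (by omega)).2)]
      rw [List.mem_flatMap]
      refine ⟨d, hd, ?_⟩
      rw [List.mem_filterMap]
      exact ⟨(k, m), hkm, by rw [if_pos hc]⟩
    · have hx : x ∈ cells := by
        have h0 := (hown 0 (by omega)).1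
        rw [stepc_zero] at h0
        exact (mem_board_cells x).1 h0
      have hc : condB pl v x d e k :=
        ⟨fun i hi => ⟨(hown i hi).2, (mem_board_cells _).1 (hown i hi).1⟩, hed, hed',
          fun i hi => ⟨(htgt i hi).2, (mem_board_cells _).1 (htgt i hi).1⟩⟩
      have hkk : k ∈ ([1, 2] : List ℕ) := by
        have : k = 1 ∨ k = 2 := by omega
        rcases this with rfl | rfl <;> simp
      refine ⟨broadC v pl x d e k, ?_,
        (dec_broadC v pl x d e k (fun i hi => (hown i hi).1) (fun i hi => (htgt i hi).1)).symm⟩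
      apply List.mem_append_right
      rw [List.mem_flatMap]
      refine ⟨x, hx, ?_⟩
      rw [if_pos (by rw [← stepc_zero x d]; exact (hown 0 (by omega)).2)]
      rw [List.mem_flatMap]
      refine ⟨d, hd, ?_⟩
      rw [List.mem_flatMap]
      refine ⟨k, hkk, ?_⟩
      rw [if_pos (show ownL pl v x d k from hc.1)]
      rw [List.mem_filterMap]
      exact ⟨e, he, by rw [if_pos hc]⟩
  · rintro ⟨w, hw, rfl⟩
    rcases List.mem_append.1 hw with h | h
    · rw [List.mem_flatMap] at h
      obtain ⟨x, hx, h⟩ := h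
      by_cases hvx : dec v x = some pl
      case neg => rw [if_neg hvx] at h; cases h
      rw [if_pos hvx] at h
      rw [List.mem_flatMap] at h
      obtain ⟨d, hd, h⟩ := h
      rw [List.mem_filterMap] at h
      obtain ⟨km, hkm, hsome⟩ := h
      by_cases hc : condI pl v x d km.1 km.2
      · rw [if_pos hc] at hsome
        obtain ⟨h1, h2, h3⟩ := hc
        obtain rfl : shiftC v x d (km.1 + km.2) = w := Option.some.inj hsome
        have hb : 1 ≤ km.1 ∧ km.1 ≤ 2 ∧ km.2 < km.1 := by
          simp only [kms, List.mem_cons, List.not_mem_nil, or_false] at hkm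
          rcases hkm with h | h | h <;> subst h <;> exact ⟨by norm_num, by norm_num, by norm_num⟩
        left
        refine ⟨x, d, hd, km.1, km.2, hb.1, hb.2.1, hb.2.2,
          fun i hi => ⟨(mem_board_cells _).2 (h1 i hi).2, (h1 i hi).1⟩,
          fun i hki hikm => ⟨(mem_board_cells _).2 (h2 i hikm hki).2, (h2 i hikm hki).1⟩, ?_, ?_⟩
        · rcases h3 with ⟨g1, g2, g3⟩ | ⟨g1, g2⟩
          · exact Or.inl ⟨g1, (mem_board_cells _).2 g2, g3⟩
          · refine Or.inr ⟨g1, ?_⟩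
            rcases g2 with g2 | g2
            · exact Or.inl (fun hcc => g2 ((mem_board_cells _).1 hcc))
            · exact Or.inr g2
        · exact dec_shiftC v x d (km.1 + km.2)
      · rw [if_neg hc] at hsome; cases hsome
    · rw [List.mem_flatMap] at h
      obtain ⟨x, hx, h⟩ := h
      by_cases hvx : dec v x = some pl
      case neg => rw [if_neg hvx] at h; cases h
      rw [if_pos hvx] at h
      rw [List.mem_flatMap] at h
      obtain ⟨d, hd, h⟩ := h
      rw [List.mem_flatMap] at h
      obtain ⟨k, hkk, h⟩ := h
      by_cases hol : ownL pl v x d k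
      case neg => rw [if_neg hol] at h; cases h
      rw [if_pos hol] at h
      rw [List.mem_filterMap] at h
      obtain ⟨e, he, hsome⟩ := h
      by_cases hc : condB pl v x d e k
      · rw [if_pos hc] at hsome
        obtain ⟨h3, h1, h2, h4⟩ := hc
        obtain rfl : broadC v pl x d e k = w := Option.some.inj hsome
        have hb : 1 ≤ k ∧ k ≤ 2 := by
          simp only [List.mem_cons, List.not_mem_nil, or_false] at hkk
          rcases hkk with h | h <;> subst h <;> exact ⟨by norm_num, by norm_num⟩
        right
        refine ⟨x, d, e, hd, he, h1, h2, k, hb.1, hb.2,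
          fun i hi => ⟨(mem_board_cells _).2 (h3 i hi).2, (h3 i hi).1⟩,
          fun i hi => ⟨(mem_board_cells _).2 (h4 i hi).2, (h4 i hi).1⟩, ?_⟩
        exact dec_broadC v pl x d e k (fun i hi => (mem_board_cells _).2 (h3 i hi).2)
          (fun i hi => (mem_board_cells _).2 (h4 i hi).2)
      · rw [if_neg hc] at hsome; cases hsome

end Abalone
namespace Abalone

lemma no_FW (pl : Bool) (A B : St → Prop)
    (hA : ∀ v, A v → ¬ Wins board222 2 pl (dec v) ∧ ∀ w ∈ succs pl v, B w)
    (hB : ∀ v, B v → ¬ Wins board222 2 pl (dec v) ∧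
      (Wins board222 2 (!pl) (dec v) ∨ ∃ w ∈ succs (!pl) v, A w)) :
    ∀ t c, G222.FW pl t c → ∀ v, c = dec v → ¬ ((t = pl ∧ A v) ∨ (t = !pl ∧ B v)) := by
  intro t c h
  induction h with
  | terminal t p hw =>
    rintro v rfl (⟨_, hv⟩ | ⟨_, hv⟩)
    · exact (hA v hv).1 hw
    · exact (hB v hv).1 hw
  | self p q hnw hmv hfw ih =>
    rintro v rfl (⟨_, hv⟩ | ⟨ht, hv⟩)
    · obtain ⟨w, hw, rfl⟩ := (move_iff pl v q).1 hmv
      exact ih w rfl (Or.inr ⟨rfl, (hA v hv).2 w hw⟩)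
    · simp at ht
  | opp p hnw hex hall ih =>
    rintro v rfl (⟨ht, hv⟩ | ⟨_, hv⟩)
    · simp at ht
    · rcases (hB v hv).2 with hwin | ⟨w, hw, hAw⟩
      · exact hnw hwin
      · have hmv : G222.move (!pl) (dec v) (dec w) := (move_iff (!pl) v (dec w)).2 ⟨w, hw, rfl⟩
        exact ih (dec w) hmv w rfl (Or.inl ⟨rfl, hAw⟩)

end Abalone
namespace Abalone

def LAt : List St := [
  (![some true, some false, none, none, none, some false, some true] : St),
  (![some false, none, some true, some false, none, some true, none] : St),
  (![some false, none, some true, none, some true, some false, none] : St),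
  (![some false, none, some true, some true, none, some false, none] : St),
  (![some false, some true, none, some true, some false, none, none] : St),
  (![some false, some true, some true, some false, none, none, none] : St),
  (![none, some false, some false, none, none, some true, some true] : St),
  (![none, some false, some false, none, some true, none, some true] : St),
  (![none, some false, some false, none, some true, some true, none] : St),
  (![none, some false, none, some false, some true, some true, none] : St),
  (![none, some false, none, none, some true, some false, some true] : St),
  (![none, some false, none, some true, none, some false, some true] : St),
  (![none, some false, none, some true, some true, some false, none] : St),
  (![none, some false, none, some true, some true, none, some false] : St),
  (![none, some false, some true, some false, none, none, some true] : St),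
  (![none, some false, some true, none, some true, some false, none] : St),
  (![none, some false, some true, none, some true, none, some false] : St),
  (![none, some false, some true, some true, none, some false, none] : St),
  (![none, none, some false, some false, none, some true, some true] : St),
  (![none, none, some false, some true, some false, some true, none] : St),
  (![none, none, some false, some true, none, some true, some false] : St),
  (![none, none, none, some false, some true, some true, some false] : St),
  (![none, none, none, some true, some false, some false, some true] : St),
  (![none, none, some true, some false, none, some false, some true] : St),
  (![none, some true, some false, some false, none, some true, none] : St),
  (![none, some true, some false, none, some false, some true, none] : St),
  (![none, some true, some false, none, none, some true, some false] : St),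
  (![none, some true, some false, some true, some false, none, none] : St),
  (![none, some true, none, some false, some false, none, some true] : St),
  (![some true, some false, some false, none, none, none, some true] : St),
  (![some true, some false, some false, none, none, some true, none] : St),
  (![some true, some false, some false, none, some true, none, none] : St),
  (![some true, some false, some false, some true, none, none, none] : St),
  (![some true, some false, none, some false, none, none, some true] : St),
  (![some true, some false, none, some false, none, some true, none] : St),
  (![some true, some false, none, some false, some true, none, none] : St),
  (![some true, some false, none, some true, none, some false, none] : St),
  (![some true, some false, some true, some false, none, none, none] : St),
  (![some true, some false, some true, none, none, some false, none] : St),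
  (![some true, none, some false, some false, none, some true, none] : St),
  (![some true, some true, some false, some false, none, none, none] : St)]

def LBt : List St := [
  (![some true, some false, none, none, none, some false, some true] : St),
  (![some false, none, none, some true, some false, some true, none] : St),
  (![some false, none, none, some true, some true, some false, none] : St),
  (![some false, none, some true, some false, none, none, some true] : St),
  (![some false, none, some true, some false, some true, none, none] : St),
  (![some false, none, some true, none, none, some false, some true] : St),
  (![some false, none, some true, none, some true, some false, none] : St),
  (![some false, none, some true, some true, none, some false, none] : St),
  (![some false, some true, none, some false, none, some true, none] : St),
  (![some false, some true, none, none, some false, none, some true] : St),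
  (![some false, some true, none, none, some false, some true, none] : St),
  (![some false, some true, some true, none, some false, none, none] : St),
  (![some false, some true, some true, none, none, some false, none] : St),
  (![none, some false, some false, none, none, some true, some true] : St),
  (![none, some false, some false, none, some true, none, some true] : St),
  (![none, some false, some false, none, some true, some true, none] : St),
  (![none, some false, some false, some true, none, none, some true] : St),
  (![none, some false, some false, some true, none, some true, none] : St),
  (![none, some false, some false, some true, some true, none, none] : St),
  (![none, some false, none, some false, none, some true, some true] : St),
  (![none, some false, none, some false, some true, none, some true] : St),
  (![none, some false, none, none, some true, some false, some true] : St),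
  (![none, some false, none, none, some true, some true, some false] : St),
  (![none, some false, none, some true, none, some false, some true] : St),
  (![none, some false, none, some true, some true, some false, none] : St),
  (![none, some false, none, some true, some true, none, some false] : St),
  (![none, some false, some true, some false, none, none, some true] : St),
  (![none, some false, some true, some false, none, some true, none] : St),
  (![none, some false, some true, some false, some true, none, none] : St),
  (![none, some false, some true, none, none, some false, some true] : St),
  (![none, some false, some true, none, some true, some false, none] : St),
  (![none, some false, some true, none, some true, none, some false] : St),
  (![none, some false, some true, some true, none, some false, none] : St),
  (![none, some false, some true, some true, none, none, some false] : St),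
  (![none, none, some false, some false, some true, some true, none] : St),
  (![none, none, some false, none, some false, some true, some true] : St),
  (![none, none, some false, none, some true, some true, some false] : St),
  (![none, none, some false, some true, some false, none, some true] : St),
  (![none, none, some false, some true, some false, some true, none] : St),
  (![none, none, some false, some true, none, some true, some false] : St),
  (![none, none, some true, some false, some true, some false, none] : St),
  (![none, none, some true, some false, some true, none, some false] : St),
  (![none, none, some true, none, some false, some false, some true] : St),
  (![none, some true, some false, some false, none, none, some true] : St),
  (![none, some true, some false, some false, none, some true, none] : St),
  (![none, some true, some false, none, some false, none, some true] : St),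
  (![none, some true, some false, none, some false, some true, none] : St),
  (![none, some true, some false, none, none, some true, some false] : St),
  (![none, some true, some false, some true, some false, none, none] : St),
  (![none, some true, some false, some true, none, none, some false] : St),
  (![none, some true, none, some false, some false, some true, none] : St),
  (![none, some true, none, some false, none, some true, some false] : St),
  (![none, some true, none, none, some false, some false, some true] : St),
  (![some true, some false, some false, none, none, none, some true] : St),
  (![some true, some false, some false, none, none, some true, none] : St),
  (![some true, some false, some false, none, some true, none, none] : St),
  (![some true, some false, some false, some true, none, none, none] : St),
  (![some true, some false, none, some false, none, none, some true] : St),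
  (![some true, some false, none, some false, none, some true, none] : St),
  (![some true, some false, none, some false, some true, none, none] : St),
  (![some true, some false, none, none, some true, some false, none] : St),
  (![some true, some false, none, none, some true, none, some false] : St),
  (![some true, some false, none, some true, none, some false, none] : St),
  (![some true, some false, some true, some false, none, none, none] : St),
  (![some true, some false, some true, none, none, some false, none] : St),
  (![some true, none, some false, some false, none, none, some true] : St),
  (![some true, none, some false, some false, none, some true, none] : St),
  (![some true, none, some false, some false, some true, none, none] : St),
  (![some true, none, some false, none, some false, some true, none] : St),
  (![some true, none, some false, none, none, some true, some false] : St),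
  (![some true, none, some false, some true, some false, none, none] : St),
  (![some true, none, none, some false, some false, none, some true] : St),
  (![some true, none, none, some false, none, some false, some true] : St),
  (![some true, none, none, none, some false, some false, some true] : St),
  (![some true, none, none, some true, some false, some false, none] : St),
  (![some true, some true, some false, none, some false, none, none] : St)]

def LAf : List St := [
  (![some true, some false, none, none, none, some false, some true] : St),
  (![some false, some false, none, some true, none, some true, none] : St),
  (![some false, some false, some true, some true, none, none, none] : St),
  (![some false, none, some false, some true, none, some true, none] : St),
  (![some false, none, none, some true, some false, none, some true] : St),
  (![some false, none, none, some true, none, some false, some true] : St),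
  (![some false, none, some true, some false, some true, none, none] : St),
  (![some false, none, some true, none, some false, none, some true] : St),
  (![some false, none, some true, none, none, some false, some true] : St),
  (![some false, none, some true, none, some true, some false, none] : St),
  (![some false, none, some true, none, some true, none, some false] : St),
  (![some false, none, some true, some true, none, none, some false] : St),
  (![some false, some true, none, some true, some false, none, none] : St),
  (![some false, some true, some true, some false, none, none, none] : St),
  (![some false, some true, some true, none, none, none, some false] : St),
  (![none, some false, some false, some true, none, none, some true] : St),
  (![none, some false, none, some true, some false, none, some true] : St),
  (![none, some false, none, some true, none, some false, some true] : St),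
  (![none, some false, none, some true, some true, none, some false] : St),
  (![none, some false, some true, none, none, some false, some true] : St),
  (![none, none, some false, none, some true, some true, some false] : St),
  (![none, none, some false, some true, some false, none, some true] : St),
  (![none, none, some false, some true, some false, some true, none] : St),
  (![none, none, some false, some true, none, some false, some true] : St),
  (![none, none, some false, some true, none, some true, some false] : St),
  (![none, none, none, some false, some true, some true, some false] : St),
  (![none, none, none, some true, some false, some false, some true] : St),
  (![none, none, none, some true, some true, some false, some false] : St),
  (![none, none, some true, some false, none, some false, some true] : St),
  (![none, none, some true, some false, some true, none, some false] : St),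
  (![none, none, some true, none, some false, some false, some true] : St),
  (![none, some true, some false, some false, none, some true, none] : St),
  (![none, some true, none, some false, some false, none, some true] : St),
  (![some true, some false, some false, some true, none, none, none] : St),
  (![some true, some false, none, some false, none, none, some true] : St),
  (![some true, some false, none, some false, some true, none, none] : St),
  (![some true, some false, none, none, some false, none, some true] : St),
  (![some true, none, some false, some false, none, none, some true] : St),
  (![some true, none, some false, some false, none, some true, none] : St),
  (![some true, none, some false, none, some false, none, some true] : St),
  (![some true, none, some false, none, none, some false, some true] : St),
  (![some true, none, none, some false, some false, none, some true] : St),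
  (![some true, none, none, some false, none, some false, some true] : St)]

def LBf : List St := [
  (![some true, some false, none, none, none, some false, some true] : St),
  (![some false, some false, none, some true, none, none, some true] : St),
  (![some false, some false, some true, none, none, none, some true] : St),
  (![some false, some false, some true, none, some true, none, none] : St),
  (![some false, none, some false, some true, none, none, some true] : St),
  (![some false, none, none, some false, some true, some true, none] : St),
  (![some false, none, none, none, some true, some true, some false] : St),
  (![some false, none, none, some true, some false, none, some true] : St),
  (![some false, none, none, some true, some false, some true, none] : St),
  (![some false, none, none, some true, none, some false, some true] : St),
  (![some false, none, none, some true, none, some true, some false] : St),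
  (![some false, none, none, some true, some true, none, some false] : St),
  (![some false, none, some true, some false, none, none, some true] : St),
  (![some false, none, some true, some false, some true, none, none] : St),
  (![some false, none, some true, none, none, some false, some true] : St),
  (![some false, none, some true, none, some true, some false, none] : St),
  (![some false, none, some true, none, some true, none, some false] : St),
  (![some false, none, some true, some true, some false, none, none] : St),
  (![some false, none, some true, some true, none, some false, none] : St),
  (![some false, some true, some false, none, none, some true, none] : St),
  (![some false, some true, none, some false, none, some true, none] : St),
  (![some false, some true, none, none, some false, none, some true] : St),
  (![some false, some true, none, some true, none, none, some false] : St),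
  (![some false, some true, some true, some false, none, none, none] : St),
  (![some false, some true, some true, none, some false, none, none] : St),
  (![some false, some true, some true, none, none, some false, none] : St),
  (![some false, some true, some true, none, none, none, some false] : St),
  (![none, some false, some false, some true, none, none, some true] : St),
  (![none, some false, some false, some true, none, some true, none] : St),
  (![none, some false, none, none, some true, some true, some false] : St),
  (![none, some false, none, some true, some false, none, some true] : St),
  (![none, some false, none, some true, none, some false, some true] : St),
  (![none, some false, none, some true, some true, some false, none] : St),
  (![none, some false, some true, some false, none, none, some true] : St),
  (![none, some false, some true, some false, some true, none, none] : St),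
  (![none, some false, some true, none, some false, none, some true] : St),
  (![none, some false, some true, none, none, some false, some true] : St),
  (![none, some false, some true, none, some true, some false, none] : St),
  (![none, some false, some true, none, some true, none, some false] : St),
  (![none, some false, some true, some true, none, none, some false] : St),
  (![none, none, some false, some false, some true, some true, none] : St),
  (![none, none, some false, none, some true, some true, some false] : St),
  (![none, none, some false, some true, some false, none, some true] : St),
  (![none, none, some false, some true, some false, some true, none] : St),
  (![none, none, some false, some true, none, some false, some true] : St),
  (![none, none, some false, some true, none, some true, some false] : St),
  (![none, none, some false, some true, some true, none, some false] : St),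
  (![none, none, none, some false, some true, some true, some false] : St),
  (![none, none, none, some true, some false, some false, some true] : St),
  (![none, none, some true, some false, some false, none, some true] : St),
  (![none, none, some true, some false, none, some false, some true] : St),
  (![none, none, some true, some false, some true, some false, none] : St),
  (![none, none, some true, some false, some true, none, some false] : St),
  (![none, none, some true, none, some false, some false, some true] : St),
  (![none, none, some true, none, some true, some false, some false] : St),
  (![none, some true, some false, some false, none, none, some true] : St),
  (![none, some true, some false, none, some false, none, some true] : St),
  (![none, some true, some false, none, some false, some true, none] : St),
  (![none, some true, some false, none, none, some true, some false] : St),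
  (![none, some true, some false, some true, some false, none, none] : St),
  (![none, some true, none, some false, some false, some true, none] : St),
  (![none, some true, none, none, some false, some false, some true] : St),
  (![none, some true, some true, some false, none, none, some false] : St),
  (![some true, some false, some false, none, none, none, some true] : St),
  (![some true, some false, some false, none, none, some true, none] : St),
  (![some true, some false, some false, none, some true, none, none] : St),
  (![some true, some false, none, some false, none, none, some true] : St),
  (![some true, some false, none, none, some false, none, some true] : St),
  (![some true, some false, none, none, some true, some false, none] : St),
  (![some true, some false, none, none, some true, none, some false] : St),
  (![some true, some false, none, some true, none, some false, none] : St),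
  (![some true, none, some false, some false, none, none, some true] : St),
  (![some true, none, some false, none, some false, none, some true] : St),
  (![some true, none, some false, none, some false, some true, none] : St),
  (![some true, none, some false, none, none, some false, some true] : St),
  (![some true, none, some false, none, none, some true, some false] : St),
  (![some true, none, some false, some true, some false, none, none] : St),
  (![some true, none, none, some false, some false, none, some true] : St),
  (![some true, none, none, some false, some false, some true, none] : St),
  (![some true, none, none, some false, none, some false, some true] : St),
  (![some true, none, none, some false, some true, some false, none] : St),
  (![some true, none, none, none, some false, some false, some true] : St)]

end Abalone
namespace Abalone

def eqSt (v w : St) : Bool :=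
  decide (v 0 = w 0) && decide (v 1 = w 1) && decide (v 2 = w 2) && decide (v 3 = w 3) &&
  decide (v 4 = w 4) && decide (v 5 = w 5) && decide (v 6 = w 6)

lemma eqSt_iff {v w : St} : eqSt v w = true ↔ v = w := by
  constructor
  · intro h
    simp only [eqSt, Bool.and_eq_true, decide_eq_true_iff] at h
    funext i
    obtain ⟨⟨⟨⟨⟨⟨h0, h1⟩, h2⟩, h3⟩, h4⟩, h5⟩, h6⟩ := h
    fin_cases i <;> assumption
  · rintro rfl
    simp [eqSt]

def memSt (L : List St) (v : St) : Bool := L.any (eqSt v)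

lemma memSt_iff {L : List St} {v : St} : memSt L v = true ↔ v ∈ L := by
  simp only [memSt, List.any_eq_true]
  constructor
  · rintro ⟨w, hw, h⟩; rw [eqSt_iff.1 h]; exact hw
  · intro h; exact ⟨v, h, eqSt_iff.2 rfl⟩

instance (board : Finset Cell) (n : ℕ) (pl : Bool) (c : Pos) : Decidable (Wins board n pl c) := by
  unfold Wins; infer_instance

def winB (pl : Bool) (v : St) : Bool := decide (Wins board222 2 pl (dec v))

def checkB (pl : Bool) (LA LB : List St) : Bool :=
  (LA.all fun v => !winB pl v && (succs pl v).all (memSt LB)) &&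
  (LB.all fun v => !winB pl v && (winB (!pl) v || (succs (!pl) v).any (memSt LA)))

lemma checkB_correct {pl : Bool} {LA LB : List St} (h : checkB pl LA LB = true) :
    (∀ v, v ∈ LA → ¬ Wins board222 2 pl (dec v) ∧ ∀ w ∈ succs pl v, w ∈ LB) ∧
    (∀ v, v ∈ LB → ¬ Wins board222 2 pl (dec v) ∧
      (Wins board222 2 (!pl) (dec v) ∨ ∃ w ∈ succs (!pl) v, w ∈ LA)) := by
  simp only [checkB, Bool.and_eq_true, List.all_eq_true] at h
  obtain ⟨h1, h2⟩ := h
  constructor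
  · intro v hv
    have := h1 v hv
    simp only [Bool.and_eq_true, Bool.not_eq_true', winB, decide_eq_false_iff_not,
      List.all_eq_true] at this
    exact ⟨this.1, fun w hw => memSt_iff.1 (this.2 w hw)⟩
  · intro v hv
    have := h2 v hv
    simp only [Bool.and_eq_true, Bool.not_eq_true', winB, decide_eq_false_iff_not,
      Bool.or_eq_true, decide_eq_true_iff, List.any_eq_true] at this
    refine ⟨this.1, ?_⟩
    rcases this.2 with h | ⟨w, hw, hm⟩
    · exact Or.inl h
    · exact Or.inr ⟨w, hw, memSt_iff.1 hm⟩

end Abalone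
namespace Abalone

def vB1 : St := ![some true, some false, none, none, none, some false, some true]

lemma B1_eq : B1 = dec vB1 := by
  funext y
  by_cases hy : y ∈ board222
  · obtain ⟨i, rfl⟩ := mem_board_cellAt hy
    fin_cases i <;> decide
  · rw [dec_off _ hy]
    rw [mem_board_iff] at hy
    push_neg at hy
    obtain ⟨h1, h2, h3, h4, h5, h6, h7⟩ := hy
    simp only [B1, mk2]
    rw [if_neg (by tauto), if_neg (by tauto)]

set_option maxRecDepth 100000 in
set_option maxHeartbeats 8000000 in
lemma checkT : checkB true LAt LBt = true := by decide

set_option maxRecDepth 100000 in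
set_option maxHeartbeats 8000000 in
lemma checkF : checkB false LAf LBf = true := by decide

end Abalone

open Abalone AGame in
/-- 2×2×2 Abalone from the Belgian-daisy-type starting configuration
`B1` is a draw under optimal play: `o(B1) = D` — neither player can force a win,
from either side to move, so optimal play continues forever. -/
theorem B1_draw : G222.OutD B1 := by
  have hT := no_FW true (· ∈ LAt) (· ∈ LBt)
    (fun v hv => (checkB_correct checkT).1 v hv)
    (fun v hv => (checkB_correct checkT).2 v hv)
  have hF := no_FW false (· ∈ LAf) (· ∈ LBf)
    (fun v hv => (checkB_correct checkF).1 v hv)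
    (fun v hv => (checkB_correct checkF).2 v hv)
  have hAt : vB1 ∈ LAt := List.mem_cons_self
  have hBt : vB1 ∈ LBt := List.mem_cons_self
  have hAf : vB1 ∈ LAf := List.mem_cons_self
  have hBf : vB1 ∈ LBf := List.mem_cons_self
  refine ⟨?_, ?_, ?_, ?_⟩
  · exact fun h => hT true B1 h vB1 B1_eq (Or.inl ⟨rfl, hAt⟩)
  · exact fun h => hT false B1 h vB1 B1_eq (Or.inr ⟨rfl, hBt⟩)
  · exact fun h => hF true B1 h vB1 B1_eq (Or.inr ⟨rfl, hBf⟩)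
  · exact fun h => hF false B1 h vB1 B1_eq (Or.inl ⟨rfl, hAf⟩)
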